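/- For every t ≥ 0 and every j ∈ J, the weighted occupation indicator satisfies H(t) 1{Z(t) = j} = 1{j = z₀} H(0) + Σ_{k ∈ J, k ≠ j} ∫_{(0,t]} H(s) N_{kj}(ds) − Σ_{k ∈ J, k ≠ j} ∫_{(0,t]} H(s) N_{jk}(ds) + ∫_{(0,t]} 1{Z(s−) = j} dH(s), where ∫ h N_{jk}(ds) is the finite sum of h(s) over jump times of type j→k in (0,t], and ∫_{(0,t]} 1{Z(s−) = j} dH(s) is the Lebesgue–Stieltjes integral with respect to the signed measure dH = dH₁ − dH₂. -/

import Mathlib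

open Set MeasureTheory

/-- `∫_{(0,t]} h(s) N_{jk}(ds)`: the (finite) sum of `h(s)` over the jump times `s ∈ (0,t]`
of type `j → k` of the path `Z`, whose left-limit path is `Zm`. -/
noncomputable def jumpInt {J : Type*} (h : ℝ → ℝ) (Zm Z : ℝ → J) (j k : J) (t : ℝ) : ℝ :=
  ∑ᶠ s ∈ {s : ℝ | s ∈ Set.Ioc 0 t ∧ Zm s = j ∧ Z s = k}, h s

lemma no_jump_const {J : Type*} (Z Zm : ℝ → J)
    (hrc : ∀ s : ℝ, 0 ≤ s → ∃ ε > 0, ∀ u ∈ Set.Ico s (s + ε), Z u = Z s)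
    (hll : ∀ s : ℝ, 0 < s → ∃ ε > 0, ∀ u ∈ Set.Ioo (s - ε) s, Z u = Zm s)
    {a b : ℝ} (ha : 0 ≤ a) (hab : a ≤ b)
    (hnoj : ∀ s ∈ Set.Ioc a b, Zm s = Z s) :
    ∀ u ∈ Set.Icc a b, Z u = Z a := by
  set A : Set ℝ := {u | u ∈ Set.Icc a b ∧ ∀ v ∈ Set.Icc a u, Z v = Z a} with hA
  have hA0 : a ∈ A := ⟨⟨le_refl a, hab⟩, fun v hv => by
    have : v = a := le_antisymm hv.2 hv.1
    rw [this]⟩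
  have hbdd : BddAbove A := ⟨b, fun u hu => hu.1.2⟩
  set c := sSup A with hc
  have hac : a ≤ c := le_csSup hbdd hA0
  have hcb : c ≤ b := csSup_le ⟨a, hA0⟩ (fun u hu => hu.1.2)
  have step1 : ∀ v ∈ Set.Ico a c, Z v = Z a := by
    intro v hv
    obtain ⟨u, huA, hvu⟩ := exists_lt_of_lt_csSup ⟨a, hA0⟩ hv.2
    exact huA.2 v ⟨hv.1, le_of_lt hvu⟩
  have step2 : Z c = Z a := by
    rcases eq_or_lt_of_le hac with h | h
    · rw [← h]
    · obtain ⟨ε, hε, hεp⟩ := hll c (lt_of_le_of_lt ha h)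
      have hu1 : max a (c - ε/2) < c := max_lt h (by linarith)
      have hu2 : c - ε < max a (c - ε/2) := lt_of_lt_of_le (by linarith) (le_max_right _ _)
      have h1 : Z (max a (c - ε/2)) = Zm c := hεp _ ⟨hu2, hu1⟩
      have h2 : Z (max a (c - ε/2)) = Z a := step1 _ ⟨le_max_left _ _, hu1⟩
      have h3 : Zm c = Z c := hnoj c ⟨h, hcb⟩
      rw [← h3, ← h1, h2]
  have cinA : c ∈ A := ⟨⟨hac, hcb⟩, fun v hv => by
    rcases eq_or_lt_of_le hv.2 with h | h
    · rw [h]; exact step2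
    · exact step1 v ⟨hv.1, h⟩⟩
  have hcbeq : c = b := by
    by_contra hne
    have hclt : c < b := lt_of_le_of_ne hcb hne
    obtain ⟨ε, hε, hεp⟩ := hrc c (le_trans ha hac)
    have hcc' : c < min b (c + ε/2) := lt_min hclt (by linarith)
    have hc'A : min b (c + ε/2) ∈ A := ⟨⟨le_trans hac (le_of_lt hcc'), min_le_left _ _⟩, fun v hv => by
      rcases le_or_gt v c with h | h
      · exact cinA.2 v ⟨hv.1, h⟩
      · have hv2 : Z v = Z c := hεp v ⟨le_of_lt h,
          lt_of_le_of_lt (le_trans hv.2 (min_le_right _ _)) (by linarith)⟩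
        rw [hv2, step2]⟩
    exact absurd (le_csSup hbdd hc'A) (not_le.mpr hcc')
  intro u hu
  exact cinA.2 u ⟨hu.1, hcbeq ▸ hu.2⟩

lemma zm_of_const {J : Type*} (Z Zm : ℝ → J)
    (hll : ∀ s : ℝ, 0 < s → ∃ ε > 0, ∀ u ∈ Set.Ioo (s - ε) s, Z u = Zm s)
    {a s : ℝ} {w : J} (h0 : 0 ≤ a) (has : a < s)
    (hc : ∀ v ∈ Set.Ico a s, Z v = w) : Zm s = w := by
  obtain ⟨ε, hε, hεp⟩ := hll s (lt_of_le_of_lt h0 has)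
  have hu1 : max a (s - ε/2) < s := max_lt has (by linarith)
  have hu2 : s - ε < max a (s - ε/2) := lt_of_lt_of_le (by linarith) (le_max_right _ _)
  rw [← hεp _ ⟨hu2, hu1⟩]
  exact hc _ ⟨le_max_left _ _, hu1⟩


lemma jump_split {J : Type*} [DecidableEq J] (h : ℝ → ℝ) (Zm Z : ℝ → J) {a b : J} (hab : a ≠ b)
    {t' sx t : ℝ} (ht' : t' < sx) (hst : sx ≤ t) (hsx : sx ∈ Set.Ioc 0 t)
    (hloc : ∀ s, s ∈ Set.Ioc 0 t → Zm s ≠ Z s → t' < s → s = sx)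
    (hfin : Set.Finite {s : ℝ | s ∈ Set.Ioc 0 t ∧ Zm s ≠ Z s}) :
    (∑ᶠ s ∈ {s : ℝ | s ∈ Set.Ioc 0 t ∧ Zm s = a ∧ Z s = b}, h s)
      = (∑ᶠ s ∈ {s : ℝ | s ∈ Set.Ioc 0 t' ∧ Zm s = a ∧ Z s = b}, h s)
        + (if Zm sx = a ∧ Z sx = b then h sx else 0) := by
  have hsubfin : ∀ u : ℝ, u ≤ t → Set.Finite {s : ℝ | s ∈ Set.Ioc 0 u ∧ Zm s = a ∧ Z s = b} := by
    intro u hu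
    refine hfin.subset (fun s hs => ⟨⟨hs.1.1, le_trans hs.1.2 hu⟩, ?_⟩)
    rw [hs.2.1, hs.2.2]; exact hab
  have hset : {s : ℝ | s ∈ Set.Ioc 0 t ∧ Zm s = a ∧ Z s = b}
      = {s : ℝ | s ∈ Set.Ioc 0 t' ∧ Zm s = a ∧ Z s = b}
        ∪ ({sx} ∩ {s | Zm s = a ∧ Z s = b}) := by
    ext s
    constructor
    · rintro ⟨hs1, hs2⟩
      rcases le_or_gt s t' with h | h
      · exact Or.inl ⟨⟨hs1.1, h⟩, hs2⟩
      · have : s = sx := hloc s hs1 (by rw [hs2.1, hs2.2]; exact hab) h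
        exact Or.inr ⟨this, hs2⟩
    · rintro (⟨hs1, hs2⟩ | ⟨hs1, hs2⟩)
      · exact ⟨⟨hs1.1, le_trans hs1.2 (le_trans (le_of_lt ht') hst)⟩, hs2⟩
      · rw [Set.mem_singleton_iff] at hs1; subst hs1; exact ⟨hsx, hs2⟩
  rw [hset, finsum_mem_union]
  · congr 1
    by_cases hcond : Zm sx = a ∧ Z sx = b
    · have hI : ({sx} ∩ {s | Zm s = a ∧ Z s = b} : Set ℝ) = {sx} := by
        apply Set.inter_eq_self_of_subset_left
        intro s hs; rw [Set.mem_singleton_iff] at hs; subst hs; exact hcond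
      rw [hI, finsum_mem_singleton, if_pos hcond]
    · have hI : ({sx} ∩ {s | Zm s = a ∧ Z s = b} : Set ℝ) = ∅ := by
        rw [Set.eq_empty_iff_forall_notMem]
        rintro s ⟨hs1, hs2⟩
        rw [Set.mem_singleton_iff] at hs1; subst hs1
        exact hcond hs2
      rw [hI, finsum_mem_empty, if_neg hcond]
  · rw [Set.disjoint_left]
    rintro s ⟨hs1, _⟩ ⟨hs2, _⟩
    rw [Set.mem_singleton_iff] at hs2; subst hs2
    exact absurd hs1.2 (not_le.mpr ht')
  · exact hsubfin t' (le_trans (le_of_lt ht') hst)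
  · exact Set.Finite.inter_of_left (Set.finite_singleton sx) _


lemma jumpInt_sub {J : Type*} (h1 h2 : ℝ → ℝ) (Zm Z : ℝ → J) (a b : J) (t : ℝ)
    (hf : Set.Finite {s : ℝ | s ∈ Set.Ioc 0 t ∧ Zm s = a ∧ Z s = b}) :
    jumpInt (fun s => h1 s - h2 s) Zm Z a b t
      = jumpInt h1 Zm Z a b t - jumpInt h2 Zm Z a b t := by
  unfold jumpInt
  rw [← Set.Finite.coe_toFinset hf, finsum_mem_coe_finset, finsum_mem_coe_finset,
    finsum_mem_coe_finset, Finset.sum_sub_distrib]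

lemma key {J : Type*} [Fintype J] [DecidableEq J] (z0 : J) (Z Zm : ℝ → J)
    (hZ0 : Z 0 = z0)
    (hrc : ∀ s : ℝ, 0 ≤ s → ∃ ε > 0, ∀ u ∈ Set.Ico s (s + ε), Z u = Z s)
    (hll : ∀ s : ℝ, 0 < s → ∃ ε > 0, ∀ u ∈ Set.Ioo (s - ε) s, Z u = Zm s)
    (hfin : ∀ t : ℝ, {s : ℝ | s ∈ Set.Ioc 0 t ∧ Zm s ≠ Z s}.Finite)
    (H : StieltjesFunction ℝ) (j : J) (n : ℕ) :
    ∀ t : ℝ, 0 ≤ t → ((hfin t).toFinset.card = n) →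
    MeasureTheory.IntegrableOn (fun s => if Zm s = j then (1:ℝ) else 0) (Set.Ioc 0 t) H.measure ∧
    H t * (if Z t = j then (1 : ℝ) else 0)
      = (if j = z0 then (1 : ℝ) else 0) * H 0
        + ∑ k ∈ Finset.univ.erase j, jumpInt (fun s => H s) Zm Z k j t
        - ∑ k ∈ Finset.univ.erase j, jumpInt (fun s => H s) Zm Z j k t
        + ∫ s in Set.Ioc (0:ℝ) t, (if Zm s = j then (1:ℝ) else 0) ∂H.measure := by
  induction n using Nat.strong_induction_on with
  | _ n ih =>
  intro t ht hcard
  have hμfin : ∀ a b : ℝ, H.measure (Set.Ioc a b) < ⊤ := by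
    intro a b; rw [H.measure_Ioc]; exact ENNReal.ofReal_lt_top
  by_cases hD : {s : ℝ | s ∈ Set.Ioc 0 t ∧ Zm s ≠ Z s} = ∅
  · -- base case: no jumps
    have hnoj : ∀ s ∈ Set.Ioc 0 t, Zm s = Z s := by
      intro s hs
      by_contra hne
      have hmem : s ∈ {s : ℝ | s ∈ Set.Ioc 0 t ∧ Zm s ≠ Z s} := ⟨hs, hne⟩
      rw [hD] at hmem
      exact hmem
    have hconst : ∀ u ∈ Set.Icc (0:ℝ) t, Z u = z0 := by
      intro u hu
      rw [← hZ0]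
      exact no_jump_const Z Zm hrc hll le_rfl ht hnoj u hu
    have hZm : ∀ s ∈ Set.Ioc (0:ℝ) t, Zm s = z0 := by
      intro s hs
      exact zm_of_const Z Zm hll le_rfl hs.1
        (fun v hv => hconst v ⟨hv.1, le_trans (le_of_lt hv.2) hs.2⟩)
    have hEq : Set.EqOn (fun _ => if z0 = j then (1:ℝ) else 0)
        (fun s => if Zm s = j then (1:ℝ) else 0) (Set.Ioc 0 t) := by
      intro s hs; simp only [hZm s hs]
    have hint : MeasureTheory.IntegrableOn (fun s => if Zm s = j then (1:ℝ) else 0)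
        (Set.Ioc 0 t) H.measure := by
      refine MeasureTheory.IntegrableOn.congr_fun ?_ hEq measurableSet_Ioc
      exact integrableOn_const (hμfin 0 t).ne
    refine ⟨hint, ?_⟩
    have hI : (∫ s in Set.Ioc (0:ℝ) t, (if Zm s = j then (1:ℝ) else 0) ∂H.measure)
        = (H t - H 0) * (if z0 = j then (1:ℝ) else 0) := by
      rw [← MeasureTheory.setIntegral_congr_fun measurableSet_Ioc hEq,
        MeasureTheory.setIntegral_const, measureReal_def, H.measure_Ioc,
        ENNReal.toReal_ofReal (by linarith [H.mono ht] : (0:ℝ) ≤ H t - H 0)]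
      rfl
    have hjz : ∀ a b : J, a ≠ b → jumpInt (fun s => H s) Zm Z a b t = 0 := by
      intro a b hab
      unfold jumpInt
      have : {s : ℝ | s ∈ Set.Ioc 0 t ∧ Zm s = a ∧ Z s = b} = ∅ := by
        rw [Set.eq_empty_iff_forall_notMem]
        rintro s ⟨hs1, hs2, hs3⟩
        have := hnoj s hs1
        rw [hs2, hs3] at this
        exact hab this
      rw [this, finsum_mem_empty]
    have hsum1 : ∑ k ∈ Finset.univ.erase j, jumpInt (fun s => H s) Zm Z k j t = 0 :=
      Finset.sum_eq_zero (fun k hk => hjz k j (Finset.ne_of_mem_erase hk))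
    have hsum2 : ∑ k ∈ Finset.univ.erase j, jumpInt (fun s => H s) Zm Z j k t = 0 :=
      Finset.sum_eq_zero (fun k hk => hjz j k (Ne.symm (Finset.ne_of_mem_erase hk)))
    have hZt : Z t = z0 := hconst t ⟨ht, le_rfl⟩
    rw [hI, hsum1, hsum2, hZt]
    by_cases hj : j = z0
    · simp [hj]
    · simp [hj, Ne.symm hj]
  · -- inductive step
    have hDne : ((hfin t).toFinset).Nonempty := by
      rw [Set.Finite.toFinset_nonempty]
      exact Set.nonempty_iff_ne_empty.mpr hD
    set D := (hfin t).toFinset with hDdef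
    set sx := D.max' hDne with hsxdef
    have hsx_mem' : sx ∈ {s : ℝ | s ∈ Set.Ioc 0 t ∧ Zm s ≠ Z s} :=
      (Set.Finite.mem_toFinset _).mp (D.max'_mem hDne)
    have hsx_mem : sx ∈ Set.Ioc 0 t ∧ Zm sx ≠ Z sx := hsx_mem'
    set E := insert (0:ℝ) (D.erase sx) with hEdef
    have hEne : E.Nonempty := ⟨0, Finset.mem_insert_self _ _⟩
    set prev := E.max' hEne with hprevdef
    have hprev0 : 0 ≤ prev := Finset.le_max' E 0 (Finset.mem_insert_self _ _)
    have hprevlt : prev < sx := by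
      rcases Finset.mem_insert.mp (E.max'_mem hEne) with h | h
      · rw [hprevdef, h]; exact hsx_mem.1.1
      · rw [hprevdef]
        exact lt_of_le_of_ne (Finset.le_max' D _ (Finset.mem_of_mem_erase h))
          (Finset.ne_of_mem_erase h)
    set t' := (prev + sx)/2 with ht'def
    have ht'pos : 0 < t' := by simp only [ht'def]; linarith [hsx_mem.1.1]
    have hprevt' : prev < t' := by simp only [ht'def]; linarith
    have ht'sx : t' < sx := by simp only [ht'def]; linarith
    have hsxt : sx ≤ t := hsx_mem.1.2
    have ht't : t' ≤ t := le_trans (le_of_lt ht'sx) hsxt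
    have hloc : ∀ s, s ∈ Set.Ioc 0 t → Zm s ≠ Z s → t' < s → s = sx := by
      intro s hs1 hs2 hs3
      by_contra hne
      have hsD : s ∈ D := (Set.Finite.mem_toFinset _).mpr ⟨hs1, hs2⟩
      have : s ≤ prev := Finset.le_max' E s (Finset.mem_insert_of_mem
        (Finset.mem_erase.mpr ⟨hne, hsD⟩))
      linarith
    have htofin' : (hfin t').toFinset = D.erase sx := by
      apply Finset.coe_injective
      rw [Set.Finite.coe_toFinset]
      ext s
      simp only [Set.mem_setOf_eq, Finset.coe_erase, Set.mem_diff,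
        Set.mem_singleton_iff, Finset.mem_coe]
      constructor
      · rintro ⟨hs1, hs2⟩
        refine ⟨(Set.Finite.mem_toFinset _).mpr ⟨⟨hs1.1, le_trans hs1.2 ht't⟩, hs2⟩, ?_⟩
        intro heq
        rw [heq] at hs1
        linarith [hs1.2]
      · rintro ⟨hsD, hne⟩
        have hmem := (Set.Finite.mem_toFinset _).mp hsD
        have hle : s ≤ prev := Finset.le_max' E s (Finset.mem_insert_of_mem
          (Finset.mem_erase.mpr ⟨hne, hsD⟩))
        exact ⟨⟨hmem.1.1, by linarith⟩, hmem.2⟩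
    have hcard' : (hfin t').toFinset.card = n - 1 := by
      rw [htofin', Finset.card_erase_of_mem (D.max'_mem hDne), hcard]
    have hnpos : 0 < n := by
      rw [← hcard]
      exact Finset.card_pos.mpr hDne
    obtain ⟨hint', hid'⟩ := ih (n-1) (Nat.sub_lt hnpos Nat.one_pos) t' (le_of_lt ht'pos) hcard'
    -- constancy facts
    have hconst1 : ∀ v ∈ Set.Ico t' sx, Z v = Z t' := by
      intro v hv
      refine no_jump_const Z Zm hrc hll (le_of_lt ht'pos) hv.1 ?_ v ⟨hv.1, le_rfl⟩
      intro s hs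
      by_contra hne
      have := hloc s ⟨lt_trans ht'pos hs.1, le_trans hs.2 (le_trans (le_of_lt hv.2) hsxt)⟩ hne hs.1
      rw [this] at hs
      linarith [hs.2, hv.2]
    have hZm1 : ∀ s ∈ Set.Ioc t' sx, Zm s = Z t' := by
      intro s hs
      exact zm_of_const Z Zm hll (le_of_lt ht'pos) hs.1
        (fun v hv => hconst1 v ⟨hv.1, lt_of_lt_of_le hv.2 hs.2⟩)
    have hconst2 : ∀ v ∈ Set.Icc sx t, Z v = Z sx := by
      refine no_jump_const Z Zm hrc hll (le_of_lt hsx_mem.1.1) hsxt ?_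
      intro s hs
      by_contra hne
      have := hloc s ⟨lt_trans hsx_mem.1.1 hs.1, hs.2⟩ hne (lt_trans ht'sx hs.1)
      rw [this] at hs
      exact absurd hs.1 (lt_irrefl sx)
    have hZm2 : ∀ s ∈ Set.Ioc sx t, Zm s = Z sx := by
      intro s hs
      exact zm_of_const Z Zm hll (le_of_lt hsx_mem.1.1) hs.1
        (fun v hv => hconst2 v ⟨hv.1, le_trans (le_of_lt hv.2) hs.2⟩)
    have hZt : Z t = Z sx := hconst2 t ⟨hsxt, le_rfl⟩
    have hZmsx : Zm sx = Z t' := zm_of_const Z Zm hll (le_of_lt ht'pos) ht'sx hconst1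
    -- jump sum splitting
    have hsum_in : ∑ k ∈ Finset.univ.erase j, jumpInt (fun s => H s) Zm Z k j t
        = (∑ k ∈ Finset.univ.erase j, jumpInt (fun s => H s) Zm Z k j t')
          + (if Z t' ≠ j ∧ Z sx = j then H sx else 0) := by
      have h1 : ∀ k ∈ Finset.univ.erase j, jumpInt (fun s => H s) Zm Z k j t
          = jumpInt (fun s => H s) Zm Z k j t' + (if Zm sx = k ∧ Z sx = j then H sx else 0) := by
        intro k hk
        exact jump_split (fun s => H s) Zm Z (Finset.ne_of_mem_erase hk) ht'sx hsxt
          hsx_mem.1 hloc (hfin t)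
      rw [Finset.sum_congr rfl h1, Finset.sum_add_distrib]
      congr 1
      rw [hZmsx]
      by_cases hA : Z sx = j
      · simp only [hA, and_true]
        rw [Finset.sum_ite_eq]
        simp [Finset.mem_erase]
      · simp [hA]
    have hsum_out : ∑ k ∈ Finset.univ.erase j, jumpInt (fun s => H s) Zm Z j k t
        = (∑ k ∈ Finset.univ.erase j, jumpInt (fun s => H s) Zm Z j k t')
          + (if Z t' = j ∧ Z sx ≠ j then H sx else 0) := by
      have h1 : ∀ k ∈ Finset.univ.erase j, jumpInt (fun s => H s) Zm Z j k t
          = jumpInt (fun s => H s) Zm Z j k t' + (if Zm sx = j ∧ Z sx = k then H sx else 0) := by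
        intro k hk
        exact jump_split (fun s => H s) Zm Z (Ne.symm (Finset.ne_of_mem_erase hk)) ht'sx hsxt
          hsx_mem.1 hloc (hfin t)
      rw [Finset.sum_congr rfl h1, Finset.sum_add_distrib]
      congr 1
      rw [hZmsx]
      by_cases hB : Z t' = j
      · simp only [hB, true_and]
        rw [Finset.sum_ite_eq]
        simp [Finset.mem_erase]
      · simp [hB]
    -- integral splitting
    have hEq1 : Set.EqOn (fun _ => if Z t' = j then (1:ℝ) else 0)
        (fun s => if Zm s = j then (1:ℝ) else 0) (Set.Ioc t' sx) := by
      intro s hs; simp only [hZm1 s hs]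
    have hEq2 : Set.EqOn (fun _ => if Z sx = j then (1:ℝ) else 0)
        (fun s => if Zm s = j then (1:ℝ) else 0) (Set.Ioc sx t) := by
      intro s hs; simp only [hZm2 s hs]
    have hint2 : MeasureTheory.IntegrableOn (fun s => if Zm s = j then (1:ℝ) else 0)
        (Set.Ioc t' sx) H.measure :=
      MeasureTheory.IntegrableOn.congr_fun
        (integrableOn_const (hμfin _ _).ne) hEq1 measurableSet_Ioc
    have hint3 : MeasureTheory.IntegrableOn (fun s => if Zm s = j then (1:ℝ) else 0)
        (Set.Ioc sx t) H.measure :=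
      MeasureTheory.IntegrableOn.congr_fun
        (integrableOn_const (hμfin _ _).ne) hEq2 measurableSet_Ioc
    have hu1 : Set.Ioc (0:ℝ) t' ∪ Set.Ioc t' sx = Set.Ioc 0 sx :=
      Set.Ioc_union_Ioc_eq_Ioc (le_of_lt ht'pos) (le_of_lt ht'sx)
    have hu2 : Set.Ioc (0:ℝ) sx ∪ Set.Ioc sx t = Set.Ioc 0 t :=
      Set.Ioc_union_Ioc_eq_Ioc (le_of_lt hsx_mem.1.1) hsxt
    have hint1 : MeasureTheory.IntegrableOn (fun s => if Zm s = j then (1:ℝ) else 0)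
        (Set.Ioc 0 sx) H.measure := by
      rw [← hu1]; exact hint'.union hint2
    have hint_t : MeasureTheory.IntegrableOn (fun s => if Zm s = j then (1:ℝ) else 0)
        (Set.Ioc 0 t) H.measure := by
      rw [← hu2]; exact hint1.union hint3
    refine ⟨hint_t, ?_⟩
    have hI2 : (∫ s in Set.Ioc t' sx, (if Zm s = j then (1:ℝ) else 0) ∂H.measure)
        = (H sx - H t') * (if Z t' = j then (1:ℝ) else 0) := by
      rw [← MeasureTheory.setIntegral_congr_fun measurableSet_Ioc hEq1,
        MeasureTheory.setIntegral_const, measureReal_def, H.measure_Ioc,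
        ENNReal.toReal_ofReal (by linarith [H.mono (le_of_lt ht'sx)] : (0:ℝ) ≤ H sx - H t')]
      rfl
    have hI3 : (∫ s in Set.Ioc sx t, (if Zm s = j then (1:ℝ) else 0) ∂H.measure)
        = (H t - H sx) * (if Z sx = j then (1:ℝ) else 0) := by
      rw [← MeasureTheory.setIntegral_congr_fun measurableSet_Ioc hEq2,
        MeasureTheory.setIntegral_const, measureReal_def, H.measure_Ioc,
        ENNReal.toReal_ofReal (by linarith [H.mono hsxt] : (0:ℝ) ≤ H t - H sx)]
      rfl
    have hIsplit : (∫ s in Set.Ioc (0:ℝ) t, (if Zm s = j then (1:ℝ) else 0) ∂H.measure)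
        = (∫ s in Set.Ioc (0:ℝ) t', (if Zm s = j then (1:ℝ) else 0) ∂H.measure)
          + (H sx - H t') * (if Z t' = j then (1:ℝ) else 0)
          + (H t - H sx) * (if Z sx = j then (1:ℝ) else 0) := by
      rw [← hu2, MeasureTheory.setIntegral_union (Set.Ioc_disjoint_Ioc_of_le le_rfl)
        measurableSet_Ioc hint1 hint3, ← hu1,
        MeasureTheory.setIntegral_union (Set.Ioc_disjoint_Ioc_of_le le_rfl)
        measurableSet_Ioc hint' hint2, hI2, hI3]
    -- final algebra
    rw [hZt, hsum_in, hsum_out, hIsplit]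
    have hne' : Z t' ≠ Z sx := by
      rw [← hZmsx]; exact hsx_mem.2
    by_cases hA : Z sx = j
    · have hB : ¬ (Z t' = j) := fun h => hne' (h.trans hA.symm)
      rw [if_pos hA, if_neg hB, if_pos (⟨hB, hA⟩ : Z t' ≠ j ∧ Z sx = j),
        if_neg (fun h : Z t' = j ∧ Z sx ≠ j => hB h.1)]
      rw [if_neg hB] at hid'
      linarith [hid']
    · by_cases hB : Z t' = j
      · rw [if_neg hA, if_pos hB, if_neg (fun h : Z t' ≠ j ∧ Z sx = j => hA h.2),
          if_pos (⟨hB, hA⟩ : Z t' = j ∧ Z sx ≠ j)]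
        rw [if_pos hB] at hid'
        linarith [hid']
      · rw [if_neg hA, if_neg hB, if_neg (fun h : Z t' ≠ j ∧ Z sx = j => hA h.2),
          if_neg (fun h : Z t' = j ∧ Z sx ≠ j => hB h.1)]
        rw [if_neg hB] at hid'
        linarith [hid']

/-- For a weight function `H = H₁ − H₂` (difference of nondecreasing
right-continuous functions), for every `t ≥ 0` and `j ∈ J`,
`H(t) 1{Z(t) = j} = 1{j = z₀} H(0) + ∑_{k ≠ j} ∫_{(0,t]} H(s) N_{kj}(ds)
  − ∑_{k ≠ j} ∫_{(0,t]} H(s) N_{jk}(ds) + ∫_{(0,t]} 1{Z(s−) = j} dH(s)`,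
where `dH = dH₁ − dH₂` is the Lebesgue–Stieltjes signed measure of `H`. -/
theorem weighted_occupation_indicator_identity
    {J : Type*} [Fintype J] [DecidableEq J] (z0 : J) (Z Zm : ℝ → J)
    (hZ0 : Z 0 = z0)
    (hrc : ∀ s : ℝ, 0 ≤ s → ∃ ε > 0, ∀ u ∈ Set.Ico s (s + ε), Z u = Z s)
    (hll : ∀ s : ℝ, 0 < s → ∃ ε > 0, ∀ u ∈ Set.Ioo (s - ε) s, Z u = Zm s)
    (hfin : ∀ t : ℝ, {s : ℝ | s ∈ Set.Ioc 0 t ∧ Zm s ≠ Z s}.Finite)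
    (H1 H2 : StieltjesFunction ℝ)
    (t : ℝ) (ht : 0 ≤ t) (j : J) :
    (H1 t - H2 t) * (if Z t = j then (1 : ℝ) else 0)
      = (if j = z0 then (1 : ℝ) else 0) * (H1 0 - H2 0)
        + ∑ k ∈ Finset.univ.erase j,
            jumpInt (fun s => H1 s - H2 s) Zm Z k j t
        - ∑ k ∈ Finset.univ.erase j,
            jumpInt (fun s => H1 s - H2 s) Zm Z j k t
        + ((∫ s in Set.Ioc (0:ℝ) t, (if Zm s = j then (1:ℝ) else 0) ∂H1.measure)
            - ∫ s in Set.Ioc (0:ℝ) t, (if Zm s = j then (1:ℝ) else 0) ∂H2.measure) := by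
  obtain ⟨_, hid1⟩ := key z0 Z Zm hZ0 hrc hll hfin H1 j ((hfin t).toFinset.card) t ht rfl
  obtain ⟨_, hid2⟩ := key z0 Z Zm hZ0 hrc hll hfin H2 j ((hfin t).toFinset.card) t ht rfl
  have hfinab : ∀ a b : J, a ≠ b →
      Set.Finite {s : ℝ | s ∈ Set.Ioc 0 t ∧ Zm s = a ∧ Z s = b} := by
    intro a b hab
    refine (hfin t).subset fun s hs => ⟨hs.1, ?_⟩
    rw [hs.2.1, hs.2.2]; exact hab
  have hs1 : ∑ k ∈ Finset.univ.erase j, jumpInt (fun s => H1 s - H2 s) Zm Z k j t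
      = (∑ k ∈ Finset.univ.erase j, jumpInt (fun s => H1 s) Zm Z k j t)
        - ∑ k ∈ Finset.univ.erase j, jumpInt (fun s => H2 s) Zm Z k j t := by
    rw [← Finset.sum_sub_distrib]
    refine Finset.sum_congr rfl fun k hk => ?_
    exact jumpInt_sub _ _ _ _ _ _ _ (hfinab k j (Finset.ne_of_mem_erase hk))
  have hs2 : ∑ k ∈ Finset.univ.erase j, jumpInt (fun s => H1 s - H2 s) Zm Z j k t
      = (∑ k ∈ Finset.univ.erase j, jumpInt (fun s => H1 s) Zm Z j k t)
        - ∑ k ∈ Finset.univ.erase j, jumpInt (fun s => H2 s) Zm Z j k t := by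
    rw [← Finset.sum_sub_distrib]
    refine Finset.sum_congr rfl fun k hk => ?_
    exact jumpInt_sub _ _ _ _ _ _ _ (hfinab j k (Ne.symm (Finset.ne_of_mem_erase hk)))
  rw [hs1, hs2, sub_mul]
  linarith [hid1, hid2]
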